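/- Let F be a field with char(F) ∉ {2,3} and t ∈ F. Then the three-dimensional algebras with MSCs As₁,₁¹⁴(3)(t), with rows (0,0,0,0,0,0,0,0,1), (0,0,0,0,0,1,0,1,t), (0,0,0,0,0,0,0,0,1), and As₁,₁¹⁴(3)(−t), with rows (0,0,0,0,0,0,0,0,1), (0,0,0,0,0,1,0,1,−t), (0,0,0,0,0,0,0,0,1), are isomorphic: there exists g ∈ GL₃(F) with g·As₁,₁¹⁴(3)(−t) = As₁,₁¹⁴(3)(t)·(g ⊗ g). -/

import Mathlib

open Matrix Kronecker

/-- Reinterpret a `3 × 9` matrix as an MSC in `M_{3×3²}(F)`, the nine columns being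
indexed by the pairs `(1,1),(1,2),(1,3),(2,1),(2,2),(2,3),(3,1),(3,2),(3,3)`
in lexicographic order. -/
def toMsc3 {F : Type*} [Field F] (M : Matrix (Fin 3) (Fin 9) F) :
    Matrix (Fin 3) (Fin 3 × Fin 3) F :=
  Matrix.of fun i p => M i ⟨(p.2 : ℕ) + 3 * (p.1 : ℕ), by omega⟩

/-- Closed nested-vector form of the MSC `As₁,₁¹⁴(3)(a)`. -/
def mscAs {F : Type*} [Field F] (a : F) : Matrix (Fin 3) (Fin 3 × Fin 3) F :=
  Matrix.of fun i p =>
    ![![![0,0,0], ![0,0,0], ![0,0,1]],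
      ![![0,0,0], ![0,0,1], ![0,1,a]],
      ![![0,0,0], ![0,0,0], ![0,0,1]]] i p.1 p.2

lemma toMsc3_As {F : Type*} [Field F] (a : F) :
    toMsc3 (F := F) !![0,0,0,0,0,0,0,0,1; 0,0,0,0,0,1,0,1,a; 0,0,0,0,0,0,0,0,1] =
      mscAs a := by
  ext i ⟨p, q⟩
  fin_cases i <;> fin_cases p <;> fin_cases q <;> rfl

set_option maxHeartbeats 1000000 in
/-- Over a field of characteristic `≠ 2, 3`, for `t ∈ F`, the algebras
`As₁,₁¹⁴(3)(t)` and `As₁,₁¹⁴(3)(−t)` are isomorphic. -/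
theorem As1114_param_isomorphic {F : Type*} [Field F]
    (h2 : (2 : F) ≠ 0) (h3 : (3 : F) ≠ 0) (t : F) :
    ∃ g : Matrix (Fin 3) (Fin 3) F, IsUnit g ∧
      g * toMsc3 (F := F)
          !![0,0,0,0,0,0,0,0,1; 0,0,0,0,0,1,0,1,-t; 0,0,0,0,0,0,0,0,1] =
        toMsc3 (F := F)
          !![0,0,0,0,0,0,0,0,1; 0,0,0,0,0,1,0,1,t; 0,0,0,0,0,0,0,0,1] * (g ⊗ₖ g) := by
  refine ⟨!![1,0,0; 0,-1,0; 0,0,1], ?_, ?_⟩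
  · rw [Matrix.isUnit_iff_isUnit_det, Matrix.det_fin_three]
    simp
  · rw [toMsc3_As, toMsc3_As]
    ext i ⟨p, q⟩
    fin_cases i <;> fin_cases p <;> fin_cases q <;>
      simp [mscAs, Matrix.mul_apply, Fintype.sum_prod_type, Fin.sum_univ_three,
        kroneckerMap_apply, Matrix.vecHead, Matrix.vecTail]
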